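/- Suppose the n-agent network is (n−κ)-redundant and the global least squares solution of Ax=b is unique (equivalently ⋂_{i=1}^n ker A_i = {0}). Then for any subset S ⊆ {1,…,n} with |S| ≥ κ, ⋂_{i∈S} ker A_i = {0}. -/

import Mathlib

open Matrix Finset

/-- The set of least squares solutions over the subset `S` of agents:
minimizers of `x ↦ ∑ i ∈ S, ‖A_i x − b_i‖²`. -/
def lsSet {n d : ℕ} {r : Fin n → ℕ} (A : ∀ i, Matrix (Fin (r i)) (Fin d) ℝ)
    (b : ∀ i, Fin (r i) → ℝ) (S : Finset (Fin n)) : Set (Fin d → ℝ) :=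
  {x | ∀ y : Fin d → ℝ,
      ∑ i ∈ S, ∑ j, ((A i *ᵥ x - b i) j) ^ 2 ≤ ∑ i ∈ S, ∑ j, ((A i *ᵥ y - b i) j) ^ 2}

/-- An `n`-agent network with data `(A_i, b_i)` is `k`-redundant if for any two subsets
`S₁, S₂` of agents with `|S₁| = |S₂| = n − k`, the least squares solution sets over
`S₁` and `S₂` coincide. -/
def kRedundant {n d : ℕ} {r : Fin n → ℕ} (A : ∀ i, Matrix (Fin (r i)) (Fin d) ℝ)
    (b : ∀ i, Fin (r i) → ℝ) (k : ℕ) : Prop :=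
  ∀ S₁ S₂ : Finset (Fin n), S₁.card = n - k → S₂.card = n - k →
    lsSet A b S₁ = lsSet A b S₂

section Aux

variable {n d : ℕ} {r : Fin n → ℕ} (A : ∀ i, Matrix (Fin (r i)) (Fin d) ℝ)
    (b : ∀ i, Fin (r i) → ℝ) (T : Finset (Fin n))

/-- The stacked linear map `x ↦ (A_i x)_{i ∈ T}` into a Euclidean space. -/
noncomputable def stackMap : (Fin d → ℝ) →ₗ[ℝ]
    EuclideanSpace ℝ ((i : T) × Fin (r i)) where
  toFun x := WithLp.toLp 2 (fun p : (i : T) × Fin (r i) => (A p.1 *ᵥ x) p.2)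
  map_add' x y := by ext p; simp [Matrix.mulVec_add]
  map_smul' c x := by ext p; simp [Matrix.mulVec_smul]

/-- The stacked right-hand side. -/
noncomputable def stackVec : EuclideanSpace ℝ ((i : T) × Fin (r i)) :=
  WithLp.toLp 2 (fun p : (i : T) × Fin (r i) => b p.1 p.2)

lemma sum_sq_eq_norm_sq (x : Fin d → ℝ) :
    ∑ i ∈ T, ∑ j, ((A i *ᵥ x - b i) j) ^ 2
      = ‖stackMap A T x - stackVec b T‖ ^ 2 := by
  rw [EuclideanSpace.norm_eq, Real.sq_sqrt (by positivity)]
  rw [← Finset.sum_coe_sort T (fun i => ∑ j, ((A i *ᵥ x - b i) j) ^ 2)]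
  rw [← Finset.univ_sigma_univ, Finset.sum_sigma]
  refine Finset.sum_congr rfl fun p _ => Finset.sum_congr rfl fun j _ => ?_
  simp [stackMap, stackVec, sq_abs, Pi.sub_apply]

lemma lsSet_nonempty : (lsSet A b T).Nonempty := by
  set L := stackMap A T with hL
  set c := stackVec b T with hc
  set W := LinearMap.range L with hW
  haveI : FiniteDimensional ℝ W := Module.Finite.range L
  obtain ⟨x₀, hx₀⟩ := (W.orthogonalProjectionOnto c).2
  refine ⟨x₀, fun y => ?_⟩
  rw [sum_sq_eq_norm_sq, sum_sq_eq_norm_sq, ← hL, ← hc]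
  have h1 : ‖L x₀ - c‖ ≤ ‖L y - c‖ := by
    rw [norm_sub_rev, hx₀, ← Submodule.starProjection_apply, Submodule.starProjection_minimal, norm_sub_rev (L y)]
    exact ciInf_le ⟨0, fun _ ⟨x, hx⟩ => hx ▸ norm_nonneg _⟩
      (⟨L y, LinearMap.mem_range_self L y⟩ : W)
  exact pow_le_pow_left₀ (norm_nonneg _) h1 2

end Aux

/-- Suppose the `n`-agent network is `(n − κ)`-redundant and the
global least squares solution of `Ax = b` is unique, equivalently
`⋂_{i=1}^n ker A_i = {0}`. Then for any subset `S` with `|S| ≥ κ`,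
`⋂_{i ∈ S} ker A_i = {0}`. -/
theorem inter_ker_eq_zero_of_redundant {n d : ℕ} {rdim : Fin n → ℕ}
    (A : ∀ i, Matrix (Fin (rdim i)) (Fin d) ℝ) (b : ∀ i, Fin (rdim i) → ℝ)
    (κ : ℕ) (hκ1 : 1 ≤ κ) (hκn : κ ≤ n)
    (hred : kRedundant A b (n - κ))
    (huniq : (⋂ i : Fin n, {x : Fin d → ℝ | A i *ᵥ x = 0}) = {0})
    (S : Finset (Fin n)) (hS : κ ≤ S.card) :
    (⋂ i ∈ S, {x : Fin d → ℝ | A i *ᵥ x = 0}) = {0} := by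
  apply Set.eq_of_subset_of_subset
  · intro v hv
    simp only [Set.mem_iInter, Set.mem_setOf_eq] at hv
    by_contra hv0
    have hv0' : v ≠ 0 := hv0
    have hnotall : v ∉ (⋂ i : Fin n, {x : Fin d → ℝ | A i *ᵥ x = 0}) := by
      rw [huniq]; exact hv0
    obtain ⟨i₀, hi₀⟩ : ∃ i, ¬ (A i *ᵥ v = 0) := by
      simpa [Set.mem_iInter] using hnotall
    -- S' ⊆ S of cardinality κ
    obtain ⟨S', hS'sub, hS'card⟩ := Finset.exists_subset_card_eq hS
    -- T of cardinality κ containing i₀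
    obtain ⟨T, hTsub, -, hTcard⟩ := Finset.exists_subsuperset_card_eq
      (Finset.subset_univ {i₀}) (by simpa using hκ1) (by simpa using hκn)
    have hi₀T : i₀ ∈ T := hTsub (Finset.mem_singleton_self i₀)
    have hcard : n - (n - κ) = κ := by omega
    have heq : lsSet A b S' = lsSet A b T :=
      hred S' T (by rw [hS'card, hcard]) (by rw [hTcard, hcard])
    obtain ⟨x, hx⟩ := lsSet_nonempty A b T
    have hx' : x ∈ lsSet A b S' := heq ▸ hx
    have hfv : ∑ i ∈ S', ∑ j, ((A i *ᵥ (x + v) - b i) j) ^ 2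
        = ∑ i ∈ S', ∑ j, ((A i *ᵥ x - b i) j) ^ 2 :=
      Finset.sum_congr rfl fun i hi => by
        rw [Matrix.mulVec_add, hv i (hS'sub hi), add_zero]
    have hxv : x + v ∈ lsSet A b S' := by
      intro y
      rw [hfv]
      exact hx' y
    have hxvT : x + v ∈ lsSet A b T := heq ▸ hxv
    -- quadratic expansion along direction v
    have expand : ∀ t : ℝ,
        ∑ i ∈ T, ∑ j, ((A i *ᵥ (x + t • v) - b i) j) ^ 2
          = ∑ i ∈ T, ∑ j, ((A i *ᵥ x - b i) j) ^ 2
            + 2 * t * ∑ i ∈ T, ∑ j, ((A i *ᵥ x - b i) j) * ((A i *ᵥ v) j)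
            + t ^ 2 * ∑ i ∈ T, ∑ j, ((A i *ᵥ v) j) ^ 2 := by
      intro t
      rw [Finset.mul_sum, Finset.mul_sum, ← Finset.sum_add_distrib,
        ← Finset.sum_add_distrib]
      refine Finset.sum_congr rfl fun i _ => ?_
      rw [Finset.mul_sum, Finset.mul_sum, ← Finset.sum_add_distrib,
        ← Finset.sum_add_distrib]
      refine Finset.sum_congr rfl fun j _ => ?_
      simp only [Matrix.mulVec_add, Matrix.mulVec_smul, Pi.sub_apply,
        Pi.add_apply, Pi.smul_apply, smul_eq_mul]
      ring
    have hQpos : 0 < ∑ i ∈ T, ∑ j, ((A i *ᵥ v) j) ^ 2 := by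
      refine Finset.sum_pos' (fun i _ => Finset.sum_nonneg fun j _ => sq_nonneg _)
        ⟨i₀, hi₀T, ?_⟩
      obtain ⟨j₀, hj₀⟩ := Function.ne_iff.mp hi₀
      exact Finset.sum_pos' (fun j _ => sq_nonneg _)
        ⟨j₀, Finset.mem_univ _, lt_of_le_of_ne (sq_nonneg _) (Ne.symm (pow_ne_zero 2 hj₀))⟩
    have h1 := hx (x + (1 / 2 : ℝ) • v)
    have h2 := hxvT (x + (1 / 2 : ℝ) • v)
    have e1 : x + v = x + (1 : ℝ) • v := by rw [one_smul]
    rw [expand (1 / 2)] at h1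
    rw [e1, expand 1, expand (1 / 2)] at h2
    nlinarith [h1, h2, hQpos]
  · intro x hx
    simp only [Set.mem_singleton_iff] at hx
    subst hx
    simp [Set.mem_iInter, Matrix.mulVec_zero]
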